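/- Assume Q > 3 and set k = Q² − 1. Then for all ξ, η ∈ ℝ²: Re A(ξ+iη) + (Q²−1) A(η) = 2(Q−3) p₁² + p₂² + 2(Q−1) p₃² + 2((Q−3)/(Q−1))(Q+1)(Q²+3) p₄², where p₁ = √α ξ₁η₁ − √γ ξ₂η₂, p₂ = √α (ξ₁² − Qη₁²) + √γ (ξ₂² − Qη₂²), p₃ = (αγ)^{1/4}(ξ₁ξ₂ − ((Q+3)/(Q−1)) η₁η₂), p₄ = (αγ)^{1/4} η₁η₂. In particular, since all the coefficients on the right-hand side are nonnegative, Re A(ξ+iη) ≥ −(Q²−1) A(η). -/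

import Mathlib

noncomputable section

/-- `A(η) = α η₁⁴ + 2β η₁²η₂² + γ η₂⁴` for `η ∈ ℝ²`. -/
def Asym (a b c : ℝ) (η : ℝ × ℝ) : ℝ :=
  a * η.1 ^ 4 + 2 * b * η.1 ^ 2 * η.2 ^ 2 + c * η.2 ^ 4

/-- `A(z) = α z₁⁴ + 2β z₁²z₂² + γ z₂⁴` for `z ∈ ℂ²`. -/
def AsymC (a b c : ℝ) (z : ℂ × ℂ) : ℂ :=
  (a : ℂ) * z.1 ^ 4 + 2 * (b : ℂ) * z.1 ^ 2 * z.2 ^ 2 + (c : ℂ) * z.2 ^ 4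

/-- `ξ + iη ∈ ℂ²` for `ξ, η ∈ ℝ²`. -/
def plusI (ξ η : ℝ × ℝ) : ℂ × ℂ :=
  ((ξ.1 : ℂ) + Complex.I * (η.1 : ℂ), (ξ.2 : ℂ) + Complex.I * (η.2 : ℂ))

end

/-- for `Q > 3` and `k = Q² − 1`, the identity
`Re A(ξ+iη) + (Q²−1)A(η) = 2(Q−3)p₁² + p₂² + 2(Q−1)p₃² + 2((Q−3)/(Q−1))(Q+1)(Q²+3)p₄²`
holds; in particular `Re A(ξ+iη) ≥ −(Q²−1)A(η)`. -/
theorem stmt10 (a b c Qv : ℝ) (ha : 0 < a) (hc : 0 < c)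
    (hQ : Qv = b / Real.sqrt (a * c)) (hQ3 : 3 < Qv) :
    (∀ ξ η : ℝ × ℝ,
      (AsymC a b c (plusI ξ η)).re + (Qv ^ 2 - 1) * Asym a b c η =
        2 * (Qv - 3) * (Real.sqrt a * ξ.1 * η.1 - Real.sqrt c * ξ.2 * η.2) ^ 2
        + (Real.sqrt a * (ξ.1 ^ 2 - Qv * η.1 ^ 2)
            + Real.sqrt c * (ξ.2 ^ 2 - Qv * η.2 ^ 2)) ^ 2
        + 2 * (Qv - 1) * ((a * c) ^ ((1 : ℝ) / 4)
            * (ξ.1 * ξ.2 - (Qv + 3) / (Qv - 1) * η.1 * η.2)) ^ 2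
        + 2 * ((Qv - 3) / (Qv - 1)) * (Qv + 1) * (Qv ^ 2 + 3)
            * ((a * c) ^ ((1 : ℝ) / 4) * η.1 * η.2) ^ 2) ∧
    ∀ ξ η : ℝ × ℝ,
      (AsymC a b c (plusI ξ η)).re ≥ -(Qv ^ 2 - 1) * Asym a b c η := by
  have key : ∀ ξ η : ℝ × ℝ,
      (AsymC a b c (plusI ξ η)).re + (Qv ^ 2 - 1) * Asym a b c η =
        2 * (Qv - 3) * (Real.sqrt a * ξ.1 * η.1 - Real.sqrt c * ξ.2 * η.2) ^ 2
        + (Real.sqrt a * (ξ.1 ^ 2 - Qv * η.1 ^ 2)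
            + Real.sqrt c * (ξ.2 ^ 2 - Qv * η.2 ^ 2)) ^ 2
        + 2 * (Qv - 1) * ((a * c) ^ ((1 : ℝ) / 4)
            * (ξ.1 * ξ.2 - (Qv + 3) / (Qv - 1) * η.1 * η.2)) ^ 2
        + 2 * ((Qv - 3) / (Qv - 1)) * (Qv + 1) * (Qv ^ 2 + 3)
            * ((a * c) ^ ((1 : ℝ) / 4) * η.1 * η.2) ^ 2 := by
    intro ξ η
    have hr : ((a * c) ^ ((1 : ℝ) / 4)) ^ 2 = Real.sqrt a * Real.sqrt c := by
      rw [← Real.rpow_natCast _ 2, ← Real.rpow_mul (by positivity)]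
      norm_num
      rw [← Real.sqrt_eq_rpow, Real.sqrt_mul ha.le]
    have hb : b = Qv * (Real.sqrt a * Real.sqrt c) := by
      rw [hQ, Real.sqrt_mul ha.le]
      field_simp
    have hsa : Real.sqrt a ^ 2 = a := Real.sq_sqrt ha.le
    have hsc : Real.sqrt c ^ 2 = c := Real.sq_sqrt hc.le
    have hQ1 : Qv - 1 ≠ 0 := by nlinarith
    simp only [mul_pow]
    rw [hr, hb]
    simp only [AsymC, plusI, Asym, Complex.add_re, Complex.add_im, Complex.mul_re,
      Complex.mul_im, Complex.I_re, Complex.I_im, Complex.ofReal_re, Complex.ofReal_im,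
      pow_succ, pow_zero, one_mul, Complex.one_re, Complex.one_im, Complex.re_ofNat,
      Complex.im_ofNat]
    generalize hga : Real.sqrt a = sa
    generalize hgc : Real.sqrt c = sc
    rw [hga] at hsa
    rw [hgc] at hsc
    rw [← hsa, ← hsc]
    field_simp
    ring
  refine ⟨key, fun ξ η => ?_⟩
  have hid := key ξ η
  have e1 : 0 ≤ 2 * (Qv - 3) * (Real.sqrt a * ξ.1 * η.1 - Real.sqrt c * ξ.2 * η.2) ^ 2 :=
    mul_nonneg (by linarith) (sq_nonneg _)
  have e2 : 0 ≤ (Real.sqrt a * (ξ.1 ^ 2 - Qv * η.1 ^ 2)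
      + Real.sqrt c * (ξ.2 ^ 2 - Qv * η.2 ^ 2)) ^ 2 := sq_nonneg _
  have e3 : 0 ≤ 2 * (Qv - 1) * ((a * c) ^ ((1 : ℝ) / 4)
      * (ξ.1 * ξ.2 - (Qv + 3) / (Qv - 1) * η.1 * η.2)) ^ 2 :=
    mul_nonneg (by linarith) (sq_nonneg _)
  have hdiv : 0 ≤ (Qv - 3) / (Qv - 1) := div_nonneg (by linarith) (by linarith)
  have e4 : 0 ≤ 2 * ((Qv - 3) / (Qv - 1)) * (Qv + 1) * (Qv ^ 2 + 3)
      * ((a * c) ^ ((1 : ℝ) / 4) * η.1 * η.2) ^ 2 := by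
    have h : 0 ≤ 2 * ((Qv - 3) / (Qv - 1)) * (Qv + 1) * (Qv ^ 2 + 3) :=
      mul_nonneg (mul_nonneg (mul_nonneg (by norm_num) hdiv) (by linarith)) (by positivity)
    exact mul_nonneg h (sq_nonneg _)
  linarith
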